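/- For any β ≥ 2, the function (z₁, z₂) ↦ min((2/β)^{−2/β} z₁², 1) + min((2/β)^{−2/β} z₂², 1) − (z₁² + z₂²)^{β/2} over z₁, z₂ ≥ 0 is maximized at every point (z₁, z₂) with z₁² + z₂² = (2/β)^{2/β}, where its value is 1 − 2/β. -/

import Mathlib

open Real

lemma key_ineq (β c : ℝ) (hβ : 2 ≤ β) (hc : 0 ≤ c) :
    (2 / β) ^ (-(2 / β)) * c - c ^ (β / 2) ≤ 1 - 2 / β := by
  have hb0 : (0:ℝ) < β := by linarith
  have h2β : (0:ℝ) < 2 / β := by positivity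
  set A : ℝ := (2 / β) ^ (2 / β) with hAdef
  have hA : 0 < A := rpow_pos_of_pos h2β _
  set t : ℝ := c / A with htdef
  have ht : 0 ≤ t := div_nonneg hc hA.le
  have hct : c = A * t := by rw [htdef]; field_simp [hA.ne']
  have hainv : (2 / β) ^ (-(2 / β)) = A⁻¹ := by
    rw [rpow_neg h2β.le]
  have hApow : A ^ (β / 2) = 2 / β := by
    rw [hAdef, ← rpow_mul h2β.le, show 2 / β * (β / 2) = 1 by field_simp, rpow_one]
  have hcpow : c ^ (β / 2) = (2 / β) * t ^ (β / 2) := by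
    rw [hct, mul_rpow hA.le ht, hApow]
  have hp : 1 ≤ β / 2 := by linarith
  have hbern : 1 + (β / 2) * (t - 1) ≤ t ^ (β / 2) := by
    have := one_add_mul_self_le_rpow_one_add (s := t - 1) (by linarith) hp
    simpa using this
  have hlhs : (2 / β) ^ (-(2 / β)) * c = t := by
    rw [hainv, hct]; field_simp
  rw [hlhs, hcpow]
  have hmul : (2 / β) * (1 + (β / 2) * (t - 1)) ≤ (2 / β) * t ^ (β / 2) :=
    mul_le_mul_of_nonneg_left hbern h2β.le
  have hexp : (2 / β) * (1 + (β / 2) * (t - 1)) = 2 / β + (t - 1) := by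
    field_simp
  nlinarith [hmul, hexp]

theorem stmt3 (β : ℝ) (hβ : 2 ≤ β) :
    (∀ z₁ z₂ : ℝ, 0 ≤ z₁ → 0 ≤ z₂ → z₁ ^ 2 + z₂ ^ 2 = (2 / β) ^ (2 / β) →
        min ((2 / β) ^ (-(2 / β)) * z₁ ^ 2) 1 + min ((2 / β) ^ (-(2 / β)) * z₂ ^ 2) 1
          - (z₁ ^ 2 + z₂ ^ 2) ^ (β / 2) = 1 - 2 / β) ∧
    (∀ z₁ z₂ : ℝ, 0 ≤ z₁ → 0 ≤ z₂ →
        min ((2 / β) ^ (-(2 / β)) * z₁ ^ 2) 1 + min ((2 / β) ^ (-(2 / β)) * z₂ ^ 2) 1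
          - (z₁ ^ 2 + z₂ ^ 2) ^ (β / 2) ≤ 1 - 2 / β) := by
  have hb0 : (0:ℝ) < β := by linarith
  have h2β : (0:ℝ) < 2 / β := by positivity
  have hA : 0 < (2 / β) ^ (2 / β) := rpow_pos_of_pos h2β _
  have hainv : (2 / β) ^ (-(2 / β)) = ((2 / β) ^ (2 / β))⁻¹ := rpow_neg h2β.le _
  have ha0 : 0 < (2 / β) ^ (-(2 / β)) := rpow_pos_of_pos h2β _
  have hApow : ((2 / β) ^ (2 / β)) ^ (β / 2) = 2 / β := by
    rw [← rpow_mul h2β.le, show 2 / β * (β / 2) = 1 by field_simp, rpow_one]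
  constructor
  · intro z₁ z₂ hz₁ hz₂ hsum
    have hsum' : (2 / β) ^ (-(2 / β)) * z₁ ^ 2 + (2 / β) ^ (-(2 / β)) * z₂ ^ 2 = 1 := by
      rw [← mul_add, hsum, hainv]
      field_simp
    have h1 : (2 / β) ^ (-(2 / β)) * z₁ ^ 2 ≤ 1 := by nlinarith [ha0, sq_nonneg z₂]
    have h2 : (2 / β) ^ (-(2 / β)) * z₂ ^ 2 ≤ 1 := by nlinarith [ha0, sq_nonneg z₁]
    rw [min_eq_left h1, min_eq_left h2, hsum', hsum, hApow]
  · intro z₁ z₂ hz₁ hz₂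
    have h1 := min_le_left ((2 / β) ^ (-(2 / β)) * z₁ ^ 2) 1
    have h2 := min_le_left ((2 / β) ^ (-(2 / β)) * z₂ ^ 2) 1
    have hkey := key_ineq β (z₁ ^ 2 + z₂ ^ 2) hβ (by positivity)
    rw [mul_add] at hkey
    linarith
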